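/- (Identifiability of the outcome model with low-rank ν, part of Proposition 1.) Assume the n × (1+q+L) design matrix [X | C | θη] has full column rank (its columns are linearly independent in ℝ^n). Suppose ν(j) = Σ_l θν(l) ψ(l)(j) and ν*(j) = Σ_l θν*(l) ψ(l)(j) both lie in the span of the basis ψ. If the outcome means of (β, γ, ζ, ν) and of (β*, γ*, ζ*, ν*) agree for every subject i ∈ Fin n and every mediator value m : Fin p → ℝ, then β = β*, γ = γ*, ζ = ζ*, and ν = ν*. -/

import Mathlib

open Matrix

/-- **Identifiability of the outcome model with low-rank ν (part of Proposition 1).**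
Suppose the basis `ψ` is orthonormal on the grid, the individual effects `η` have the
low-rank form `η(i)(j) = Σ_l θη(i)(l) ψ(l)(j)`, the design matrix `[X | C | θη]` has
full column rank, and `ν`, `ν*` both lie in the span of `ψ`. Then equality of the
outcome means for every subject `i` and every mediator value `m` forces
`β = β*`, `γ = γ*`, `ζ = ζ*`, `ν = ν*`. -/
theorem outcome_model_identifiable_lowRank
    {n p q L : ℕ} (lam : Fin p → ℝ) (X : Fin n → ℝ) (C : Fin n → Fin q → ℝ)
    (ψ : Fin L → Fin p → ℝ)
    (hortho : ∀ l l' : Fin L,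
      (∑ j, ψ l j * ψ l' j * lam j) = if l = l' then (1 : ℝ) else 0)
    (θη : Fin n → Fin L → ℝ) (η : Fin n → Fin p → ℝ)
    (hη : ∀ i j, η i j = ∑ l, θη i l * ψ l j)
    (hrank : LinearIndependent ℝ
      (Fin.append (Fin.cons X (fun k i => C i k)) (fun l i => θη i l)
        : Fin ((q + 1) + L) → Fin n → ℝ))
    (β β' : Fin p → ℝ) (γ γ' : ℝ) (ζ ζ' : Fin q → ℝ) (ν ν' : Fin p → ℝ)
    (θν θν' : Fin L → ℝ)
    (hν : ∀ j, ν j = ∑ l, θν l * ψ l j)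
    (hν' : ∀ j, ν' j = ∑ l, θν' l * ψ l j)
    (hmean : ∀ (i : Fin n) (m : Fin p → ℝ),
      (∑ j, β j * m j) + γ * X i + (∑ k, ζ k * C i k) + (∑ j, ν j * η i j * lam j)
        = (∑ j, β' j * m j) + γ' * X i + (∑ k, ζ' k * C i k)
          + (∑ j, ν' j * η i j * lam j)) :
    β = β' ∧ γ = γ' ∧ ζ = ζ' ∧ ν = ν' := by
  -- n > 0
  have hn : 0 < n := by
    rcases Nat.eq_zero_or_pos n with h | h
    · exfalso
      subst h
      have := hrank.ne_zero ⟨0, by omega⟩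
      exact this (funext fun i => Fin.elim0 i)
    · exact h
  have i0 : Fin n := ⟨0, hn⟩
  -- β = β'
  have hβ : β = β' := by
    funext j
    have h1 := hmean i0 (Pi.single j 1)
    have h2 := hmean i0 0
    simp only [Pi.zero_apply, mul_zero, Finset.sum_const_zero] at h2
    have hs : ∀ b : Fin p → ℝ, (∑ j', b j' * Pi.single (M := fun _ : Fin p => ℝ) j 1 j') = b j := by
      intro b
      rw [Finset.sum_eq_single j]
      · simp
      · intro k _ hk; simp [Pi.single_apply, hk]
      · simp
    rw [hs β, hs β'] at h1
    linarith
  -- orthonormality computation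
  have key : ∀ (a : Fin L → ℝ) (i : Fin n),
      (∑ j, (∑ l, a l * ψ l j) * η i j * lam j) = ∑ l, a l * θη i l := by
    intro a i
    have step : ∀ j, (∑ l, a l * ψ l j) * η i j * lam j
        = ∑ l, ∑ l', a l * θη i l' * (ψ l j * ψ l' j * lam j) := by
      intro j
      rw [hη, Finset.sum_mul_sum, Finset.sum_mul]
      refine Finset.sum_congr rfl fun l _ => ?_
      rw [Finset.sum_mul]
      refine Finset.sum_congr rfl fun l' _ => ?_
      ring
    have : (∑ j, (∑ l, a l * ψ l j) * η i j * lam j)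
        = ∑ l, ∑ l', a l * θη i l' * ∑ j, ψ l j * ψ l' j * lam j := by
      rw [Finset.sum_congr rfl fun j _ => step j, Finset.sum_comm]
      refine Finset.sum_congr rfl fun l _ => ?_
      rw [Finset.sum_comm]
      refine Finset.sum_congr rfl fun l' _ => ?_
      rw [Finset.mul_sum]
    rw [this]
    congr 1; funext l
    rw [Finset.sum_eq_single l]
    · rw [hortho l l]; simp
    · intro l' _ hl'; rw [hortho l l']; simp [Ne.symm hl']
    · simp
  -- reduced equation
  have hred : ∀ i, (γ - γ') * X i + (∑ k, (ζ k - ζ' k) * C i k)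
      + (∑ l, (θν l - θν' l) * θη i l) = 0 := by
    intro i
    have h := hmean i 0
    simp only [Pi.zero_apply, mul_zero, Finset.sum_const_zero] at h
    have e1 : (∑ j, ν j * η i j * lam j) = ∑ l, θν l * θη i l := by
      have := key θν i
      simp only [← hν] at this
      exact this
    have e2 : (∑ j, ν' j * η i j * lam j) = ∑ l, θν' l * θη i l := by
      have := key θν' i
      simp only [← hν'] at this
      exact this
    rw [e1, e2] at h
    have hζ : (∑ k, (ζ k - ζ' k) * C i k) = (∑ k, ζ k * C i k) - ∑ k, ζ' k * C i k := by
      rw [← Finset.sum_sub_distrib]; congr 1; funext k; ring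
    have hθ : (∑ l, (θν l - θν' l) * θη i l)
        = (∑ l, θν l * θη i l) - ∑ l, θν' l * θη i l := by
      rw [← Finset.sum_sub_distrib]; congr 1; funext l; ring
    rw [hζ, hθ]
    linarith
  -- apply linear independence
  set g : Fin ((q + 1) + L) → ℝ :=
    Fin.append (Fin.cons (γ - γ') (fun k => ζ k - ζ' k)) (fun l => θν l - θν' l) with hg
  have hzero : ∀ r, g r = 0 := by
    apply Fintype.linearIndependent_iff.mp hrank
    funext i
    simp only [Finset.sum_apply, Pi.smul_apply, smul_eq_mul, Pi.zero_apply]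
    rw [Fin.sum_univ_add]
    simp only [hg, Fin.append_left, Fin.append_right]
    rw [Fin.sum_univ_succ]
    simp only [Fin.cons_zero, Fin.cons_succ]
    have := hred i
    linarith [hred i]
  have hγ : γ = γ' := by
    have := hzero (Fin.castAdd L (0 : Fin (q + 1)))
    simp only [hg, Fin.append_left, Fin.cons_zero] at this
    linarith
  have hζ : ζ = ζ' := by
    funext k
    have := hzero (Fin.castAdd L (k.succ))
    simp only [hg, Fin.append_left, Fin.cons_succ] at this
    linarith
  have hθν : ∀ l, θν l = θν' l := by
    intro l
    have := hzero (Fin.natAdd (q + 1) l)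
    simp only [hg, Fin.append_right] at this
    linarith
  refine ⟨hβ, hγ, hζ, ?_⟩
  funext j
  rw [hν, hν']
  congr 1; funext l
  rw [hθν l]
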